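/- For all x > 0, the modified Bessel functions satisfy I_1(x)^2 - I_0(x) * I_2(x) > 0. -/

import Mathlib

open Finset Nat

private lemma bessel_vdm1 (m : ℕ) :
    ∑ i ∈ range (m+1), m.choose i * (m+3).choose (i+1) = (2*m+3).choose (m+2) := by
  have h := Nat.add_choose_eq m (m+3) (m+2)
  rw [Finset.Nat.sum_antidiagonal_eq_sum_range_succ (fun a b => m.choose a * (m+3).choose b)] at h
  rw [show m + (m+3) = 2*m+3 by ring] at h
  rw [h]
  rw [Finset.sum_subset (Finset.range_subset_range.2 (by omega : m+1 ≤ m+2+1))]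
  · apply Finset.sum_congr rfl
    intro i hi
    simp only [Finset.mem_range] at hi
    congr 1
    rw [← Nat.choose_symm (by omega : i+1 ≤ m+3)]
    congr 1
    omega
  · intro i _ hi
    simp only [Finset.mem_range, not_lt] at hi
    rw [Nat.choose_eq_zero_of_lt (by omega)]
    ring

private lemma bessel_vdm2 (m : ℕ) :
    ∑ i ∈ range (m+1), i * (m.choose i * (m+3).choose (i+1))
    = m * (2*m+2).choose (m+1) := by
  obtain rfl | ⟨n, rfl⟩ : m = 0 ∨ ∃ n, m = n + 1 := by rcases m with _|n <;> simp
  · simp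
  · rw [Finset.sum_range_succ' (fun i => i * ((n+1).choose i * (n+1+3).choose (i+1)))]
    simp only [zero_mul, add_zero]
    have key : ∀ k, (k+1) * ((n+1).choose (k+1) * (n+1+3).choose (k+1+1))
        = (n+1) * ((n.choose k) * (n+4).choose (k+2)) := by
      intro k
      have h2 := Nat.add_one_mul_choose_eq n k
      calc (k+1) * ((n+1).choose (k+1) * (n+1+3).choose (k+1+1))
          = ((n+1).choose (k+1) * (k+1)) * (n+4).choose (k+2) := by ring_nf
        _ = ((n+1) * n.choose k) * (n+4).choose (k+2) := by rw [← h2]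
        _ = (n+1) * (n.choose k * (n+4).choose (k+2)) := by ring
    rw [Finset.sum_congr rfl (fun k _ => key k), ← Finset.mul_sum]
    have h := Nat.add_choose_eq n (n+4) (n+2)
    rw [Finset.Nat.sum_antidiagonal_eq_sum_range_succ (fun a b => n.choose a * (n+4).choose b)] at h
    have h3 : ∑ k ∈ range (n+2+1), n.choose k * (n+4).choose (n+2-k)
        = ∑ k ∈ range (n+1), n.choose k * (n+4).choose (k+2) := by
      rw [← Finset.sum_subset (Finset.range_subset_range.2 (by omega : n+1 ≤ n+2+1))]
      · apply Finset.sum_congr rfl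
        intro k hk
        simp only [Finset.mem_range] at hk
        congr 1
        rw [← Nat.choose_symm (by omega : k+2 ≤ n+4)]
        congr 1
        omega
      · intro k _ hk
        simp only [Finset.mem_range, not_lt] at hk
        rw [Nat.choose_eq_zero_of_lt (by omega)]
        ring
    rw [h3] at h
    rw [← h, show n + (n+4) = 2*(n+1)+2 from by ring]

private lemma bessel_Tpos (m : ℕ) :
    0 < ∑ i ∈ range (m+1), ((m:ℝ)+1-2*i) * (m.choose i * (m+3).choose (i+1)) := by
  have h1 := bessel_vdm1 m
  have h2 := bessel_vdm2 m
  have hsplit : ∑ i ∈ range (m+1), ((m:ℝ)+1-2*i) * (m.choose i * (m+3).choose (i+1))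
      = ((m:ℝ)+1) * ((∑ i ∈ range (m+1), m.choose i * (m+3).choose (i+1) : ℕ) : ℝ)
        - 2 * ((∑ i ∈ range (m+1), i * (m.choose i * (m+3).choose (i+1)) : ℕ) : ℝ) := by
    push_cast
    rw [Finset.mul_sum, Finset.mul_sum, ← Finset.sum_sub_distrib]
    apply Finset.sum_congr rfl
    intro i _
    ring
  rw [hsplit, h1, h2, sub_pos]
  have key : (m+2) * (2 * (m * (2*m+2).choose (m+1))) < (m+2) * ((m+1) * (2*m+3).choose (m+2)) := by
    have hs := Nat.add_one_mul_choose_eq (2*m+2) (m+1)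
    have hC : 0 < (2*m+2).choose (m+1) := Nat.choose_pos (by omega)
    calc (m+2) * (2 * (m * (2*m+2).choose (m+1)))
        = (2*m*(m+2)) * (2*m+2).choose (m+1) := by ring
      _ < ((m+1)*(2*m+3)) * (2*m+2).choose (m+1) := by
          exact Nat.mul_lt_mul_of_lt_of_le (by nlinarith) le_rfl hC
      _ = (m+1) * ((2*m+3) * (2*m+2).choose (m+1)) := by ring
      _ = (m+1) * ((2*m+2+1).choose (m+1+1) * (m+2)) := by rw [hs]
      _ = (m+2) * ((m+1) * (2*m+3).choose (m+2)) := by ring_nf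
  have h4 := Nat.lt_of_mul_lt_mul_left key
  have h' : ((2 * (m * (2*m+2).choose (m+1)) : ℕ) : ℝ) < (((m+1) * (2*m+3).choose (m+2) : ℕ) : ℝ) := by
    exact_mod_cast h4
  push_cast at h' ⊢
  linarith

set_option maxHeartbeats 2000000 in
private lemma bessel_pointwise (m i j : ℕ) (hij : i + j = m) :
    (1:ℝ)/(i ! * (i+1)!) * (1/(j ! * (j+1)!)) - 1/(i ! * i !) * (1/(j ! * (j+2)!))
      = ((m:ℝ)+1-2*i) * (m.choose i * (m+3).choose (i+1)) / (m ! * (m+3)!) := by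
  have f0 : ∀ n : ℕ, ((n ! : ℝ)) ≠ 0 := fun n => Nat.cast_ne_zero.2 n.factorial_ne_zero
  have hc1 : (m.choose i : ℝ) = m ! / (i ! * j !) := by
    have := Nat.choose_mul_factorial_mul_factorial (le_of_add_le_left hij.le)
    rw [show m - i = j from by omega] at this
    field_simp
    rw [← this]
    push_cast
    ring
  have hc2 : ((m+3).choose (i+1) : ℝ) = (m+3)! / ((i+1)! * (j+2)!) := by
    have := Nat.choose_mul_factorial_mul_factorial (show i+1 ≤ m+3 by omega)
    rw [show m + 3 - (i+1) = j + 2 from by omega] at this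
    field_simp
    rw [← this]
    push_cast
    ring
  rw [hc1, hc2]
  have e1 : ((i+1)! : ℝ) = (i+1) * i ! := by exact_mod_cast Nat.factorial_succ i
  have e2 : ((j+1)! : ℝ) = (j+1) * j ! := by exact_mod_cast Nat.factorial_succ j
  have e3 : ((j+2)! : ℝ) = (j+2) * ((j+1) * j !) := by
    rw [show j+2 = (j+1)+1 from rfl]
    push_cast [Nat.factorial_succ]
    ring
  have hm : (m:ℝ) = i + j := by exact_mod_cast hij.symm
  rw [e1, e2, e3, hm]
  have hi : ((i:ℝ)+1) ≠ 0 := by positivity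
  have hj1 : ((j:ℝ)+1) ≠ 0 := by positivity
  have hj2 : ((j:ℝ)+2) ≠ 0 := by positivity
  field_simp
  ring

private lemma bessel_summable_norm (t : ℝ) (k : ℕ) :
    Summable (fun n : ℕ => ‖t^(2*n+k) / ((n ! : ℝ) * ((n+k)! : ℝ))‖) := by
  have hsum : Summable (fun n : ℕ => |t|^k * ((|t|^2)^n / n !)) :=
    (Real.summable_pow_div_factorial (|t|^2)).mul_left _
  refine Summable.of_nonneg_of_le (fun n => norm_nonneg _) (fun n => ?_) hsum
  · 
    have h1 : ‖t^(2*n+k) / ((n ! : ℝ) * ((n+k)! : ℝ))‖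
        = |t|^(2*n+k) / ((n ! : ℝ) * ((n+k)! : ℝ)) := by
      rw [norm_div, norm_pow, Real.norm_eq_abs]
      congr 1
      rw [Real.norm_eq_abs, abs_of_nonneg]
      positivity
    rw [h1]
    have h2 : |t|^(2*n+k) = |t|^k * (|t|^2)^n := by
      rw [← pow_mul, ← pow_add]
      ring_nf
    rw [h2, mul_div_assoc]
    apply mul_le_mul_of_nonneg_left _ (by positivity)
    apply div_le_div_of_nonneg_left (by positivity) (by positivity)
    have : (1:ℝ) ≤ ((n+k)! : ℝ) := by exact_mod_cast Nat.one_le_iff_ne_zero.2 (n+k).factorial_ne_zero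
    nlinarith [(Nat.cast_pos (α := ℝ)).2 n.factorial_pos]

/-- Modified Bessel function of the first kind of order `k`,
`I_k(x) = ∑_{n ≥ 0} (x/2)^(2n+k) / (n! (n+k)!)`. -/
noncomputable def besselI (k : ℕ) (x : ℝ) : ℝ :=
  ∑' n : ℕ, (x / 2) ^ (2 * n + k) / (Nat.factorial n * Nat.factorial (n + k))

theorem bessel_wronskian_pos :
    ∀ x : ℝ, 0 < x → 0 < besselI 1 x ^ 2 - besselI 0 x * besselI 2 x := by
  intro x hx
  set t : ℝ := x / 2 with htdef
  have ht : 0 < t := by positivity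
  set a : ℕ → ℕ → ℝ := fun k n => t ^ (2*n+k) / ((n ! : ℝ) * ((n+k)! : ℝ)) with ha
  have hIb : ∀ k, besselI k x = ∑' n, a k n := fun k => rfl
  have hs : ∀ k, Summable fun n => ‖a k n‖ := fun k => bessel_summable_norm t k
  have h11 : besselI 1 x * besselI 1 x
      = ∑' m, ∑ kl ∈ Finset.HasAntidiagonal.antidiagonal m, a 1 kl.1 * a 1 kl.2 := by
    rw [hIb 1]
    exact tsum_mul_tsum_eq_tsum_sum_antidiagonal_of_summable_norm (hs 1) (hs 1)
  have h02 : besselI 0 x * besselI 2 x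
      = ∑' m, ∑ kl ∈ Finset.HasAntidiagonal.antidiagonal m, a 0 kl.1 * a 2 kl.2 := by
    rw [hIb 0, hIb 2]
    exact tsum_mul_tsum_eq_tsum_sum_antidiagonal_of_summable_norm (hs 0) (hs 2)
  have S1 : Summable (fun m => ∑ kl ∈ Finset.HasAntidiagonal.antidiagonal m, a 1 kl.1 * a 1 kl.2) :=
    (summable_norm_sum_mul_antidiagonal_of_summable_norm (hs 1) (hs 1)).of_norm
  have S2 : Summable (fun m => ∑ kl ∈ Finset.HasAntidiagonal.antidiagonal m, a 0 kl.1 * a 2 kl.2) :=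
    (summable_norm_sum_mul_antidiagonal_of_summable_norm (hs 0) (hs 2)).of_norm
  have hD : ∀ m : ℕ, (∑ kl ∈ Finset.HasAntidiagonal.antidiagonal m, a 1 kl.1 * a 1 kl.2)
      - (∑ kl ∈ Finset.HasAntidiagonal.antidiagonal m, a 0 kl.1 * a 2 kl.2)
      = (t^(2*m+2) / (m ! * (m+3)!)) *
        ∑ i ∈ range (m+1), ((m:ℝ)+1-2*i) * (m.choose i * (m+3).choose (i+1)) := by
    intro m
    rw [← Finset.sum_sub_distrib]
    have step : ∀ kl ∈ Finset.HasAntidiagonal.antidiagonal m,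
        a 1 kl.1 * a 1 kl.2 - a 0 kl.1 * a 2 kl.2
        = (t^(2*m+2) / (m ! * (m+3)!)) *
          (((m:ℝ)+1-2*kl.1) * (m.choose kl.1 * (m+3).choose (kl.1+1))) := by
      rintro ⟨i, j⟩ hkl
      have hij : i + j = m := Finset.HasAntidiagonal.mem_antidiagonal.1 hkl
      have e : t^(2*i+1) * t^(2*j+1) = t^(2*m+2) := by rw [← pow_add]; congr 1; omega
      have e' : t^(2*i) * t^(2*j+2) = t^(2*m+2) := by rw [← pow_add]; congr 1; omega
      have expand : a 1 i * a 1 j - a 0 i * a 2 j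
          = t^(2*m+2) * ((1:ℝ)/(i ! * (i+1)!) * (1/(j ! * (j+1)!))
              - 1/(i ! * i !) * (1/(j ! * (j+2)!))) := by
        calc a 1 i * a 1 j - a 0 i * a 2 j
            = t^(2*i+1) * t^(2*j+1) * ((1:ℝ)/(i ! * (i+1)!) * (1/(j ! * (j+1)!)))
              - t^(2*i) * t^(2*j+2) * ((1:ℝ)/(i ! * i !) * (1/(j ! * (j+2)!))) := by
              simp only [ha, Nat.add_zero]; ring
          _ = t^(2*m+2) * ((1:ℝ)/(i ! * (i+1)!) * (1/(j ! * (j+1)!))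
              - 1/(i ! * i !) * (1/(j ! * (j+2)!))) := by rw [e, e']; ring
      simp only []
      rw [expand, bessel_pointwise m i j hij]
      ring
    rw [Finset.sum_congr rfl step, ← Finset.mul_sum]
    congr 1
    rw [Finset.Nat.sum_antidiagonal_eq_sum_range_succ_mk
      (fun kl : ℕ × ℕ => ((m:ℝ)+1-2*kl.1) * (m.choose kl.1 * (m+3).choose (kl.1+1))) m]
  have key : besselI 1 x ^ 2 - besselI 0 x * besselI 2 x
      = ∑' m : ℕ, ((∑ kl ∈ Finset.HasAntidiagonal.antidiagonal m, a 1 kl.1 * a 1 kl.2)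
        - (∑ kl ∈ Finset.HasAntidiagonal.antidiagonal m, a 0 kl.1 * a 2 kl.2)) := by
    rw [sq, h11, h02, S1.tsum_sub S2]
  rw [key]
  refine Summable.tsum_pos (S1.sub S2) ?_ 0 ?_
  · intro m
    rw [hD m]
    have hT := bessel_Tpos m
    positivity
  · rw [hD 0]
    have hT := bessel_Tpos 0
    positivity
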